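/- arXiv:0906.5263 — 2 statements merged into one kernel-verified Lean document; each statement's English description precedes it below -/
import Mathlib

section
/- Suppose the data mining algorithm outputs exactly m patterns for every dataset, and datasets are drawn from a discrete null distribution Π_0. Define the limiting sample-based p-value of pattern x in dataset D' as p(x) = Σ_{D̂} Pr(D̂) · |{y ∈ A(D̂) : f(x,D') ≤ f(y,D̂)}| / m. Then for D' ~ Π_0 and any α ∈ [0,1], Pr(m · min_{x ∈ A(D')} p(x) ≤ α) ≤ α (the minP-property holds). -/
open scoped Classical

/-- Probability integral transform step: if for every dataset in the "reject"
set the tail probability at its own statistic is at most `α`, then the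
probability of the reject set is at most `α`. -/
lemma stmt_8_aux {D : Type*} [Fintype D] (w : D → ℝ) (hw : ∀ d, 0 ≤ w d)
    (g : D → ℝ) (α : ℝ) (hα0 : 0 ≤ α) (C : D → Prop) [DecidablePred C]
    (h : ∀ d', C d' → ∑ d, w d * (if g d' ≤ g d then 1 else 0) ≤ α) :
    ∑ d', w d' * (if C d' then 1 else 0) ≤ α := by
  classical
  have hrw : ∑ d', w d' * (if C d' then 1 else 0)
      = ∑ d' ∈ Finset.univ.filter C, w d' := by
    rw [Finset.sum_filter]
    refine Finset.sum_congr rfl fun d' _ => ?_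
    by_cases hC : C d' <;> simp [hC]
  rw [hrw]
  rcases (Finset.univ.filter C).eq_empty_or_nonempty with hS | hS
  · simp [hS, hα0]
  · obtain ⟨d0, hd0, hmin⟩ := Finset.exists_min_image _ g hS
    have hd0C : C d0 := (Finset.mem_filter.mp hd0).2
    calc ∑ d' ∈ Finset.univ.filter C, w d'
        ≤ ∑ d' ∈ Finset.univ.filter C, w d' * (if g d0 ≤ g d' then 1 else 0) := by
          refine Finset.sum_le_sum fun d' hd' => ?_
          rw [if_pos (hmin d' hd'), mul_one]
      _ ≤ ∑ d', w d' * (if g d0 ≤ g d' then 1 else 0) := by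
          refine Finset.sum_le_sum_of_subset_of_nonneg (Finset.filter_subset _ _)
            fun d' _ _ => ?_
          by_cases hgt : g d0 ≤ g d' <;> simp [hgt, hw d']
      _ ≤ α := h d0 hd0C

/-- minP-property for constant output size: if the algorithm outputs exactly
`m` patterns on every dataset, datasets are drawn from a discrete null
distribution `w`, and the limiting sample-based p-value of pattern `x` in
dataset `D'` is `p(x) = ∑_{D̂} w(D̂)·|{y ∈ A(D̂) : f(x,D') ≤ f(y,D̂)}| / m`,
then `Pr_{D' ~ w}(m · min_{x ∈ A(D')} p(x) ≤ α) ≤ α` for all `α ∈ [0,1]`. -/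
theorem stmt_8 (D χ : Type*) [Fintype D]
    (w : D → ℝ) (hw : ∀ d, 0 ≤ w d) (hsum : ∑ d, w d = 1)
    (A : D → Finset χ) (m : ℕ) (hm : 0 < m) (hcard : ∀ d, (A d).card = m)
    (f : χ → D → ℝ) (α : ℝ) (hα : α ∈ Set.Icc (0 : ℝ) 1) :
    ∑ d', w d' *
        (if (m : ℝ) *
            ((A d').inf' (Finset.card_pos.mp (by rw [hcard d']; exact hm))
              fun x => ∑ d, w d * (((A d).filter fun y => f x d' ≤ f y d).card : ℝ) / m)
            ≤ α then 1 else 0)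
      ≤ α := by
  classical
  obtain ⟨hα0, hα1⟩ := hα
  have hA : ∀ d, (A d).Nonempty := fun d =>
    Finset.card_pos.mp (by rw [hcard d]; exact hm)
  have hmR : (0 : ℝ) < m := by exact_mod_cast hm
  set g : D → ℝ := fun d => (A d).sup' (hA d) fun y => f y d with hgdef
  refine stmt_8_aux w hw g α hα0 _ fun d' hd' => ?_
  -- extract a minimizer of the p-value on A d'
  obtain ⟨x0, hx0, hinf⟩ := Finset.exists_mem_eq_inf' (hA d')
    (fun x => ∑ d, w d * (((A d).filter fun y => f x d' ≤ f y d).card : ℝ) / m)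
  have hd'' : (m : ℝ) * ((A d').inf' (hA d')
      fun x => ∑ d, w d * (((A d).filter fun y => f x d' ≤ f y d).card : ℝ) / m) ≤ α := hd'
  rw [hinf] at hd''
  -- f x0 d' ≤ g d'
  have hfg : f x0 d' ≤ g d' := Finset.le_sup' (fun y => f y d') hx0
  calc ∑ d, w d * (if g d' ≤ g d then 1 else 0)
      ≤ ∑ d, w d * (if f x0 d' ≤ g d then 1 else 0) := by
        refine Finset.sum_le_sum fun d _ => ?_
        refine mul_le_mul_of_nonneg_left ?_ (hw d)
        by_cases hgt : g d' ≤ g d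
        · rw [if_pos hgt, if_pos (le_trans hfg hgt)]
        · rw [if_neg hgt]; by_cases h2 : f x0 d' ≤ g d <;> simp [h2]
    _ ≤ (m : ℝ) * ∑ d, w d * (((A d).filter fun y => f x0 d' ≤ f y d).card : ℝ) / m := by
        rw [Finset.mul_sum]
        refine Finset.sum_le_sum fun d _ => ?_
        have hrw : (m : ℝ) * (w d * (((A d).filter fun y => f x0 d' ≤ f y d).card : ℝ) / m)
            = w d * (((A d).filter fun y => f x0 d' ≤ f y d).card : ℝ) := by
          field_simp
        rw [hrw]
        by_cases hgt : f x0 d' ≤ g d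
        · rw [if_pos hgt]
          refine mul_le_mul_of_nonneg_left ?_ (hw d)
          obtain ⟨y, hy, hyeq⟩ := Finset.exists_mem_eq_sup' (hA d) (fun y => f y d)
          have hymem : y ∈ (A d).filter fun y => f x0 d' ≤ f y d :=
            Finset.mem_filter.mpr ⟨hy, by rw [← hyeq]; exact hgt⟩
          have hcard1 : 1 ≤ ((A d).filter fun y => f x0 d' ≤ f y d).card :=
            Finset.card_pos.mpr ⟨y, hymem⟩
          exact_mod_cast hcard1
        · rw [if_neg hgt, mul_zero]
          exact mul_nonneg (hw d) (Nat.cast_nonneg _)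
    _ ≤ α := hd''
end

section
/- Adversarial example violating the minP-property: suppose with probability 4/5 the algorithm outputs one pattern whose p-value is uniform on [1/10, 1], and with probability 1/5 it outputs two patterns, one with p-value uniform on [0, 1/10] and one uniform on [1/10, 1]. Let p' be the minimum output p-value and m₀ the number of output patterns. Then Pr(m₀·p' ≤ 3/5) = 29/45 > 3/5, so the minP-property fails at t = 3/5. -/
open MeasureTheory

/-- Adversarial example violating the minP-property: with probability `4/5`
the algorithm outputs one pattern with p-value uniform on `[1/10, 1]`, and
with probability `1/5` two patterns, the smaller p-value uniform on
`[0, 1/10]`.  Then `Pr(m₀·p' ≤ 3/5) = 29/45 > 3/5`, violating the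
minP-property at `t = 3/5`. -/
theorem stmt_10 {Ω : Type*} [MeasurableSpace Ω] (P : Measure Ω) [IsProbabilityMeasure P]
    (m₀ : Ω → ℕ) (p' : Ω → ℝ) (hm₀ : Measurable m₀) (hp' : Measurable p')
    (hcases : ∀ ω, m₀ ω = 1 ∨ m₀ ω = 2)
    (h1 : ∀ c ∈ Set.Icc (1/10 : ℝ) 1,
      P {ω | m₀ ω = 1 ∧ p' ω ≤ c} = ENNReal.ofReal ((4/5) * ((c - 1/10) / (9/10))))
    (h2 : P {ω | m₀ ω = 2} = ENNReal.ofReal (1/5))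
    (h2p : ∀ ω, m₀ ω = 2 → 0 ≤ p' ω ∧ p' ω ≤ 1/10) :
    P {ω | (m₀ ω : ℝ) * p' ω ≤ 3/5} = ENNReal.ofReal (29/45) ∧
    (3/5 : ℝ) < 29/45 := by

  constructor
  · have hset : {ω | (m₀ ω : ℝ) * p' ω ≤ 3/5}
        = {ω | m₀ ω = 1 ∧ p' ω ≤ 3/5} ∪ {ω | m₀ ω = 2} := by
      ext ω
      rcases hcases ω with h | h
      · simp only [Set.mem_setOf_eq, Set.mem_union, h]
        norm_num
      · have hb := h2p ω h
        simp only [Set.mem_setOf_eq, Set.mem_union, h]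
        constructor
        · intro _; right; trivial
        · intro _
          push_cast
          nlinarith [hb.1, hb.2]
    have hdisj : Disjoint {ω | m₀ ω = 1 ∧ p' ω ≤ 3/5} {ω | m₀ ω = 2} := by
      rw [Set.disjoint_left]
      rintro ω ⟨h1', _⟩ h2'
      simp only [Set.mem_setOf_eq] at h2'
      omega
    have hmeas : MeasurableSet {ω | m₀ ω = 2} := hm₀ (measurableSet_singleton 2)
    rw [hset, measure_union hdisj hmeas, h1 (3/5) (by norm_num), h2]
    rw [← ENNReal.ofReal_add (by norm_num) (by norm_num)]
    norm_num
  · norm_num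
end
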